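/- Let F be a field of characteristic p > 0, let {a₁,…,aₙ} ⊆ F* be p-independent over F (so π = ⟪a₁,…,aₙ⟫ is anisotropic over F), let 1 ≤ s ≤ n, and set σ = ⟨1,a₁,…,a_s⟩. Let E/F be a field extension with dim(π_E)_an = p^k. Then dim(σ_E)_an ≥ k − n + s + 1. -/

import Mathlib

open scoped BigOperators

set_option synthInstance.maxHeartbeats 1000000
set_option maxHeartbeats 1000000

/-- The subfield `F^p` of `p`-th powers of `F` (generated as a subfield). -/
def pPow (p : ℕ) (F : Type*) [Field F] : Subfield F :=
  Subfield.closure (Set.range fun x : F => x ^ p)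

/-- The degree `[F^p(S) : F^p]`. -/
noncomputable def pDeg (p : ℕ) {F : Type*} [Field F] (S : Set F) : ℕ :=
  Module.finrank ↥(pPow p F) ↥(IntermediateField.adjoin ↥(pPow p F) S)

/-- A finite family `a : ι → F` is `p`-independent over `F` if
`[F^p(a i, i : ι) : F^p] = p ^ #ι`. -/
def pIndep (p : ℕ) {F : Type*} [Field F] {ι : Type*} [Fintype ι] (a : ι → F) : Prop :=
  pDeg p (Set.range a) = p ^ Fintype.card ι

/-- The defect `i_d(φ_E)` of the diagonal quasilinear `p`-form with coefficients `a` over `E`: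
the `E`-dimension of its zero set (an `E`-subspace in characteristic `p`). -/
noncomputable def defect (p : ℕ) (E : Type*) [Field E] {ι : Type*} [Fintype ι] (a : ι → E) : ℕ :=
  Module.finrank E ↥(Submodule.span E {x : ι → E | ∑ i, a i * x i ^ p = 0})

/-- A diagonal quasilinear `p`-form is anisotropic over `E`. -/
def Anisotropic (p : ℕ) (E : Type*) [Field E] {ι : Type*} [Fintype ι] (a : ι → E) : Prop :=
  ∀ x : ι → E, ∑ i, a i * x i ^ p = 0 → x = 0

/-- The value set `D_E(φ)` of a diagonal quasilinear `p`-form. -/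
def valueSet (p : ℕ) (E : Type*) [Field E] {ι : Type*} [Fintype ι] (a : ι → E) : Set E :=
  {y | ∃ x : ι → E, y = ∑ i, a i * x i ^ p}
section Aux

variable (p : ℕ) [Fact p.Prime] (E : Type*) [Field E] [CharP E p]

instance auxExpChar : ExpChar E p := .prime Fact.out

lemma pow_mem_pPow (x : E) : x ^ p ∈ pPow p E :=
  Subfield.subset_closure ⟨x, rfl⟩

lemma mem_pPow_iff {y : E} : y ∈ pPow p E ↔ ∃ x : E, x ^ p = y := by
  constructor
  · intro hy
    have hle : pPow p E ≤ (frobenius E p).fieldRange := by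
      rw [pPow, Subfield.closure_le]
      rintro _ ⟨x, rfl⟩
      exact ⟨x, by simp [frobenius_def]⟩
    obtain ⟨x, hx⟩ := hle hy
    exact ⟨x, by simpa [frobenius_def] using hx⟩
  · rintro ⟨x, rfl⟩; exact pow_mem_pPow p E x

variable {ι : Type*} [Fintype ι]

/-- The zero set of a diagonal quasilinear form, as a submodule. -/
def zeroSet (b : ι → E) : Submodule E (ι → E) where
  carrier := {x | ∑ i, b i * x i ^ p = 0}
  add_mem' := by
    intro x y hx hy
    simp only [Set.mem_setOf_eq] at *
    have : ∀ i, b i * (x i + y i) ^ p = b i * x i ^ p + b i * y i ^ p := by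
      intro i; rw [add_pow_char, mul_add]
    simp only [Pi.add_apply, this, Finset.sum_add_distrib, hx, hy, add_zero]
  zero_mem' := by
    have hp0 : p ≠ 0 := (Fact.out : p.Prime).ne_zero
    simp [zero_pow hp0]
  smul_mem' := by
    intro c x hx
    simp only [Set.mem_setOf_eq] at *
    have : ∀ i, b i * (c * x i) ^ p = c ^ p * (b i * x i ^ p) := by
      intro i; rw [mul_pow]; ring
    simp only [Pi.smul_apply, smul_eq_mul, this, ← Finset.mul_sum, hx, mul_zero]

lemma defect_eq_finrank_zeroSet (b : ι → E) :
    defect p E b = Module.finrank E ↥(zeroSet p E b) := by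
  have h : {x : ι → E | ∑ i, b i * x i ^ p = 0} = ↑(zeroSet p E b) := rfl
  rw [defect, h, Submodule.span_eq]

lemma defect_add_rank (b : ι → E) :
    defect p E b
      + Module.finrank ↥(pPow p E) ↥(Submodule.span ↥(pPow p E) (Set.range b))
      = Fintype.card ι := by
  classical
  set K := pPow p E with hK
  let L : (ι → ↥K) →ₗ[↥K] E := Fintype.linearCombination ↥K b
  have hrn := LinearMap.finrank_range_add_finrank_ker L
  have hrange : LinearMap.range L = Submodule.span ↥K (Set.range b) :=
    Fintype.range_linearCombination ↥K b
  rw [hrange, Module.finrank_fintype_fun_eq_card] at hrn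
  have hp0 : p ≠ 0 := (Fact.out : p.Prime).ne_zero
  have hmain : Module.finrank E ↥(zeroSet p E b)
      = Module.finrank ↥K ↥(LinearMap.ker L) := by
    apply le_antisymm
    · -- transport a basis of the zero set into the kernel
      set d := Module.finrank E ↥(zeroSet p E b) with hd
      let v := Module.finBasis E ↥(zeroSet p E b)
      let c : Fin d → (ι → ↥K) := fun j i => ⟨((v j : ι → E) i) ^ p, pow_mem_pPow p E _⟩
      have hcker : ∀ j, c j ∈ LinearMap.ker L := by
        intro j
        rw [LinearMap.mem_ker]
        have hv : ∑ i, b i * ((v j : ι → E) i) ^ p = 0 := (v j).2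
        rw [show L (c j) = ∑ i, (c j i) • b i from Fintype.linearCombination_apply ..]
        calc ∑ i, (c j i) • b i = ∑ i, b i * ((v j : ι → E) i) ^ p := by
              refine Finset.sum_congr rfl fun i _ => ?_
              rw [Subfield.smul_def]; exact mul_comm _ _
          _ = 0 := hv
      have hcind : LinearIndependent ↥K c := by
        rw [Fintype.linearIndependent_iff]
        intro u hu
        choose t ht using fun j => (mem_pPow_iff p E).mp (u j).2
        have hvind : LinearIndependent E (fun j => (v j : ι → E)) :=
          (v.linearIndependent).map' (zeroSet p E b).subtype (Submodule.ker_subtype _)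
        have hzero : ∑ j, t j • (v j : ι → E) = 0 := by
          funext i
          have hcoord : ∑ j, t j * (v j : ι → E) i = 0 := by
            rw [← pow_eq_zero_iff (n := p) hp0, sum_pow_char]
            have h2 : ∑ j, u j * c j i = 0 := by
              have := congrFun hu i
              simpa [Finset.sum_apply, Pi.smul_apply, smul_eq_mul] using this
            calc ∑ j, (t j * (v j : ι → E) i) ^ p
                = ∑ j, ((u j * c j i : ↥K) : E) := by
                  refine Finset.sum_congr rfl fun j _ => ?_
                  rw [mul_pow, MulMemClass.coe_mul, ht]
              _ = ((∑ j, u j * c j i : ↥K) : E) := by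
                  rw [AddSubmonoidClass.coe_finset_sum]
              _ = 0 := by rw [h2]; rfl
          simpa [Finset.sum_apply, Pi.smul_apply, smul_eq_mul] using hcoord
        have ht0 := Fintype.linearIndependent_iff.mp hvind t hzero
        intro j
        have : ((u j : E)) = 0 := by rw [← ht j, ht0 j, zero_pow hp0]
        exact Subtype.ext (by simpa using this)
      have hle : Submodule.span ↥K (Set.range c) ≤ LinearMap.ker L :=
        Submodule.span_le.mpr (by rintro _ ⟨j, rfl⟩; exact hcker j)
      calc d = Module.finrank ↥K ↥(Submodule.span ↥K (Set.range c)) := by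
            rw [finrank_span_eq_card hcind, Fintype.card_fin]
        _ ≤ Module.finrank ↥K ↥(LinearMap.ker L) := Submodule.finrank_mono hle
    · -- transport a basis of the kernel into the zero set
      set d' := Module.finrank ↥K ↥(LinearMap.ker L) with hd'
      let w := Module.finBasis ↥K ↥(LinearMap.ker L)
      have hmem : ∀ (j : Fin d') (i : ι), ∃ x : E, x ^ p = (((w j : ι → ↥K)) i : E) :=
        fun j i => (mem_pPow_iff p E).mp ((w j : ι → ↥K) i).2
      choose x hx using hmem
      have hxW : ∀ j, x j ∈ zeroSet p E b := by
        intro j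
        have h0 : L (w j : ι → ↥K) = 0 := LinearMap.mem_ker.mp (w j).2
        rw [show L (w j : ι → ↥K) = ∑ i, ((w j : ι → ↥K) i) • b i from
          Fintype.linearCombination_apply ..] at h0
        show ∑ i, b i * (x j i) ^ p = 0
        calc ∑ i, b i * (x j i) ^ p = ∑ i, ((w j : ι → ↥K) i) • b i := by
              refine Finset.sum_congr rfl fun i _ => ?_
              rw [Subfield.smul_def, hx]; exact mul_comm _ _
          _ = 0 := h0
      have hxind : LinearIndependent E (x ·) := by
        rw [Fintype.linearIndependent_iff]
        intro t htsum
        have hwind : LinearIndependent ↥K (fun j => (w j : ι → ↥K)) :=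
          (w.linearIndependent).map' (LinearMap.ker L).subtype (Submodule.ker_subtype _)
        have hu : ∑ j, (⟨t j ^ p, pow_mem_pPow p E _⟩ : ↥K) • (w j : ι → ↥K) = 0 := by
          funext i
          have hcoord : ∑ j, t j * x j i = 0 := by
            simpa [Finset.sum_apply, Pi.smul_apply, smul_eq_mul] using congrFun htsum i
          have h3 : ∑ j, t j ^ p * x j i ^ p = 0 := by
            have := congrArg (· ^ p) hcoord
            simpa [sum_pow_char, mul_pow, zero_pow hp0] using this
          apply Subtype.ext
          have hL : ((∑ j, (⟨t j ^ p, pow_mem_pPow p E _⟩ : ↥K) • (w j : ι → ↥K)) i : E)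
              = ∑ j, t j ^ p * x j i ^ p := by
            simp only [Finset.sum_apply, Pi.smul_apply, smul_eq_mul]
            rw [AddSubmonoidClass.coe_finset_sum]
            refine Finset.sum_congr rfl fun j _ => ?_
            rw [MulMemClass.coe_mul, hx]
          refine hL.trans (h3.trans ?_)
          simp
        have := Fintype.linearIndependent_iff.mp hwind _ hu
        intro j
        have h4 : t j ^ p = 0 := by
          have := this j
          simpa using congrArg (Subtype.val) this
        exact pow_eq_zero_iff hp0 |>.mp h4
      have hle : Submodule.span E (Set.range (x ·)) ≤ zeroSet p E b :=
        Submodule.span_le.mpr (by rintro _ ⟨j, rfl⟩; exact hxW j)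
      calc d' = Module.finrank E ↥(Submodule.span E (Set.range (x ·))) := by
            rw [finrank_span_eq_card hxind, Fintype.card_fin]
        _ ≤ Module.finrank E ↥(zeroSet p E b) := Submodule.finrank_mono hle
  rw [defect_eq_finrank_zeroSet, hmain]
  omega

end Aux

section Mono

variable (p : ℕ) [Fact p.Prime] (E : Type*) [Field E] [CharP E p]
variable {γ : Type*} [Fintype γ] (g : γ → E)

/-- The span of the monomials of multidegree `< p` in the `g i`. -/
noncomputable def monoSpan : Submodule ↥(pPow p E) E :=
  Submodule.span ↥(pPow p E) (Set.range fun e : γ → Fin p => ∏ i, g i ^ (e i : ℕ))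

lemma mono_mem_monoSpan (N : γ → ℕ) : (∏ i, g i ^ N i) ∈ monoSpan p E g := by
  have hp0 : p ≠ 0 := (Fact.out : p.Prime).ne_zero
  have hc : (∏ i, g i ^ (p * (N i / p))) ∈ pPow p E := by
    refine prod_mem fun i _ => ?_
    rw [pow_mul]
    exact pow_mem (pow_mem_pPow p E (g i)) _
  have key : ∏ i, g i ^ N i
      = (⟨_, hc⟩ : ↥(pPow p E)) • ∏ i, g i ^ (N i % p) := by
    rw [Subfield.smul_def]
    show ∏ i, g i ^ N i = (∏ i, g i ^ (p * (N i / p))) * ∏ i, g i ^ (N i % p)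
    rw [← Finset.prod_mul_distrib]
    refine Finset.prod_congr rfl fun i _ => ?_
    rw [← pow_add, Nat.div_add_mod]
  rw [key]
  refine Submodule.smul_mem _ _ (Submodule.subset_span ?_)
  exact ⟨fun i => ⟨N i % p, Nat.mod_lt _ (Nat.pos_of_ne_zero hp0)⟩, rfl⟩

lemma one_mem_monoSpan : (1 : E) ∈ monoSpan p E g := by
  have := mono_mem_monoSpan p E g (fun _ => 0)
  simpa using this

lemma self_mem_monoSpan (i : γ) : g i ∈ monoSpan p E g := by
  classical
  have := mono_mem_monoSpan p E g (Pi.single i 1)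
  have h : ∏ j, g j ^ (Pi.single i 1 : γ → ℕ) j = g i := by
    rw [Finset.prod_eq_single i]
    · simp
    · intro j _ hji; simp [Pi.single_eq_of_ne hji]
    · simp
  rwa [h] at this

lemma mul_mem_monoSpan : ∀ x ∈ monoSpan p E g, ∀ y ∈ monoSpan p E g,
    x * y ∈ monoSpan p E g := by
  intro x hx
  induction hx using Submodule.span_induction with
  | mem x hxm =>
    intro y hy
    induction hy using Submodule.span_induction with
    | mem y hym =>
      obtain ⟨e, rfl⟩ := hxm
      obtain ⟨f, rfl⟩ := hym
      rw [← Finset.prod_mul_distrib]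
      have h : ∀ i ∈ Finset.univ, g i ^ (e i : ℕ) * g i ^ (f i : ℕ)
          = g i ^ ((e i : ℕ) + (f i : ℕ)) := fun i _ => (pow_add _ _ _).symm
      rw [Finset.prod_congr rfl h]
      exact mono_mem_monoSpan p E g _
    | zero => rw [mul_zero]; exact zero_mem _
    | add y z hy hz ihy ihz => rw [mul_add]; exact add_mem ihy ihz
    | smul c y hy ih => rw [mul_smul_comm]; exact Submodule.smul_mem _ _ ih
  | zero => intro y hy; rw [zero_mul]; exact zero_mem _
  | add x z hx hz ihx ihz => intro y hy; rw [add_mul]; exact add_mem (ihx y hy) (ihz y hy)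
  | smul c x hx ih => intro y hy; rw [smul_mul_assoc]; exact Submodule.smul_mem _ _ (ih y hy)

lemma pow_mem_monoSpan {x : E} (hx : x ∈ monoSpan p E g) (m : ℕ) :
    x ^ m ∈ monoSpan p E g := by
  induction m with
  | zero => simpa using one_mem_monoSpan p E g
  | succ m ih => rw [pow_succ]; exact mul_mem_monoSpan p E g _ ih _ hx

lemma prod_mem_monoSpan {δ : Type*} (s : Finset δ) (f : δ → E)
    (hf : ∀ i ∈ s, f i ∈ monoSpan p E g) : (∏ i ∈ s, f i) ∈ monoSpan p E g := by
  refine Finset.prod_induction f (· ∈ monoSpan p E g)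
    (fun a b ha hb => mul_mem_monoSpan p E g a ha b hb) (one_mem_monoSpan p E g) hf

end Mono

lemma monoSpan_eq (p : ℕ) [Fact p.Prime] (E : Type*) [Field E] [CharP E p]
    {γ : Type*} [Fintype γ] (g : γ → E) :
    monoSpan p E g
      = Submodule.span ↥(pPow p E) (Set.range fun e : γ → Fin p => ∏ i, g i ^ (e i : ℕ)) :=
  rfl


universe u v

/-- If `σ = ⟨1,a₁,…,a_s⟩` is a minimal subform of the anisotropic quasi-Pfister form
`π = ⟪a₁,…,aₙ⟫` and `dim(π_E)_an = p^k`, then `dim(σ_E)_an ≥ k − n + s + 1`. -/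
theorem dim_an_subform_ge_of_pfister (p : ℕ) [Fact p.Prime] (F : Type u) [Field F] [CharP F p]
    (n : ℕ) (a : Fin n → F) (ha0 : ∀ i, a i ≠ 0) (hindep : pIndep p a)
    (s : ℕ) (hs1 : 1 ≤ s) (hsn : s ≤ n)
    (E : Type v) [Field E] [Algebra F E] (k : ℕ)
    (hk : p ^ n - defect p E
      (fun i : Fin n → Fin p => algebraMap F E (∏ r, a r ^ (i r : ℕ))) = p ^ k) :
    k + s + 1 - n ≤ s + 1 - defect p E (fun j : Fin (s + 1) => algebraMap F E
      ((Fin.cons (1 : F) (fun i : Fin s => a (Fin.castLE hsn i)) : Fin (s + 1) → F) j)) := by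
  classical
  haveI : CharP E p := charP_of_injective_algebraMap (algebraMap F E).injective p
  have hp1 : 1 < p := (Fact.out : p.Prime).one_lt
  set K := pPow p E with hKdef
  set aE : Fin n → E := fun r => algebraMap F E (a r) with haE
  set bπ : (Fin n → Fin p) → E :=
    (fun i : Fin n → Fin p => algebraMap F E (∏ r, a r ^ (i r : ℕ))) with hbπ
  set bσ : Fin (s + 1) → E := (fun j : Fin (s + 1) => algebraMap F E
      ((Fin.cons (1 : F) (fun i : Fin s => a (Fin.castLE hsn i)) : Fin (s + 1) → F) j)) with hbσ
  have hπeq := defect_add_rank p E bπ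
  rw [Fintype.card_fun, Fintype.card_fin, Fintype.card_fin] at hπeq
  have hσeq := defect_add_rank p E bσ
  rw [Fintype.card_fin] at hσeq
  set m := Module.finrank ↥K ↥(Submodule.span ↥K (Set.range bσ)) with hm
  set R := Module.finrank ↥K ↥(Submodule.span ↥K (Set.range bπ)) with hR'
  have hR : R = p ^ k := by omega
  -- extend {1} to a linearly independent subset of range bσ spanning it
  have h1mem : (1 : E) ∈ Set.range bσ := ⟨0, by simp [hbσ]⟩
  obtain ⟨b, hbt, h1b, hspan, hbind⟩ := exists_linearIndepOn_id_extension
    ((linearIndepOn_singleton_iff (R := ↥K) (v := id)).mpr (one_ne_zero : (1 : E) ≠ 0))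
    (Set.singleton_subset_iff.mpr h1mem)
  have hbfin : b.Finite := (Set.finite_range bσ).subset hbt
  haveI := hbfin.fintype
  haveI : FiniteDimensional ↥K ↥(Submodule.span ↥K (Set.range bσ)) :=
    FiniteDimensional.span_of_finite _ (Set.finite_range _)
  have hcardb : b.toFinset.card ≤ m := by
    rw [← finrank_span_set_eq_card (s := b) hbind]
    exact Submodule.finrank_mono (Submodule.span_mono hbt)
  have hb1 : 1 ≤ b.toFinset.card :=
    Finset.card_pos.mpr ⟨1, Set.mem_toFinset.mpr (h1b (Set.mem_singleton _))⟩
  set S : Set E := b \ {1} with hS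
  haveI : Fintype ↥S := (hbfin.subset Set.diff_subset).fintype
  have hcardS : S.toFinset.card = b.toFinset.card - 1 := by
    have hfs : S.toFinset = b.toFinset \ {1} := by
      ext x
      simp [hS, Set.mem_toFinset]
    rw [hfs, Finset.card_sdiff_of_subset
      (by rw [Finset.singleton_subset_iff, Set.mem_toFinset]; exact h1b rfl)]
    simp
  set g : (↥S ⊕ Fin (n - s)) → E :=
    Sum.elim (fun x => (x : E)) (fun i : Fin (n - s) => aE ⟨s + (i : ℕ), by omega⟩) with hg
  have hbP : b ⊆ ↑(monoSpan p E g) := by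
    intro x hxb
    rcases eq_or_ne x 1 with rfl | hx1
    · exact one_mem_monoSpan p E g
    · have hxS : x ∈ S := ⟨hxb, hx1⟩
      have := self_mem_monoSpan p E g (Sum.inl ⟨x, hxS⟩)
      simpa [hg] using this
  have haEP : ∀ r : Fin n, aE r ∈ monoSpan p E g := by
    intro r
    by_cases hr : (r : ℕ) < s
    · have hcast : Fin.castLE hsn ⟨(r : ℕ), hr⟩ = r := Fin.ext rfl
      have hmem : aE r ∈ Set.range bσ :=
        ⟨Fin.succ ⟨(r : ℕ), hr⟩, by simp only [hbσ, Fin.cons_succ, hcast, haE]⟩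
      exact Submodule.span_le.mpr hbP (hspan hmem)
    · push_neg at hr
      have heq : aE r = g (Sum.inr ⟨(r : ℕ) - s, by omega⟩) := by
        rw [hg]
        simp only [Sum.elim_inr]
        congr 1
        exact Fin.ext (by simp; omega)
      rw [heq]
      exact self_mem_monoSpan p E g _
  have hbπP : ∀ i : Fin n → Fin p, bπ i ∈ monoSpan p E g := by
    intro i
    have heq : bπ i = ∏ r, aE r ^ ((i r : ℕ)) := by
      simp only [hbπ, haE, map_prod, map_pow]
    rw [heq]
    exact prod_mem_monoSpan p E g _ _ fun r _ => pow_mem_monoSpan p E g (haEP r) _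
  haveI : FiniteDimensional ↥K ↥(monoSpan p E g) := by
    rw [monoSpan_eq]
    exact FiniteDimensional.span_of_finite _ (Set.finite_range _)
  have hRle : R ≤ p ^ (S.toFinset.card + (n - s)) := by
    have hle : Submodule.span ↥K (Set.range bπ) ≤ monoSpan p E g :=
      Submodule.span_le.mpr (by rintro _ ⟨i, rfl⟩; exact hbπP i)
    have h1 : R ≤ Module.finrank ↥K ↥(monoSpan p E g) := Submodule.finrank_mono hle
    have h2 : Module.finrank ↥K ↥(monoSpan p E g)
        ≤ Fintype.card ((↥S ⊕ Fin (n - s)) → Fin p) := by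
      rw [monoSpan_eq]
      refine le_trans (finrank_span_le_card _) ?_
      rw [Set.toFinset_card]
      exact Fintype.card_range_le _
    rw [Fintype.card_fun, Fintype.card_fin, Fintype.card_sum, ← Set.toFinset_card,
      Fintype.card_fin] at h2
    exact le_trans h1 h2
  have hk2 : k ≤ S.toFinset.card + (n - s) :=
    (Nat.pow_le_pow_iff_right hp1).mp (hR ▸ hRle)
  omega
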